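/- arXiv:2009.03708 — 3 statements merged into one kernel-verified Lean document; each statement's English description precedes it below -/
import Mathlib

section
/- Every play of the Zeckendorf game starting from n copies of 1 terminates in a finite number of moves at the Zeckendorf decomposition of n: there is no infinite sequence of legal moves, and any state admitting no legal move is a set of distinct non-consecutive Fibonacci numbers summing to n. -/
/-- Fibonacci numbers indexed so that `zF 1 = 1`, `zF 2 = 2`,
`zF (i+1) = zF i + zF (i-1)`. -/
def zF (n : ℕ) : ℕ := Nat.fib (n + 1)

/-- The starting state of the Zeckendorf game on `n`: `n` copies of `F 1 = 1`.
States are multisets of indices `i`, the index `i` standing for `F i`. -/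
def zstart (n : ℕ) : Multiset ℕ := Multiset.replicate n 1

/-- Legal moves of the Zeckendorf game, on multisets of indices. -/
inductive ZMove : Multiset ℕ → Multiset ℕ → Prop
  | combine (i : ℕ) (M : Multiset ℕ) (hi : 2 ≤ i) :
      ZMove ({i - 1, i} + M) ({i + 1} + M)
  | combine1 (M : Multiset ℕ) : ZMove ({1, 1} + M) ({2} + M)
  | split2 (M : Multiset ℕ) : ZMove ({2, 2} + M) ({1, 3} + M)
  | split (i : ℕ) (M : Multiset ℕ) (hi : 3 ≤ i) :
      ZMove ({i, i} + M) ({i - 2, i + 1} + M)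

/-- `ZWins p S t M` : in the `p`-player Zeckendorf game where move number `t`
(counting from 0) is made by player `t % p`, the coalition `S` of players has a
strategy from state `M` at turn `t` guaranteeing that a member of `S` makes the
final move (the move producing a state with no legal moves). -/
inductive ZWins (p : ℕ) (S : Set ℕ) : ℕ → Multiset ℕ → Prop
  | mine_end (t : ℕ) (M M' : Multiset ℕ) (hS : t % p ∈ S) (hmv : ZMove M M')
      (h : ∀ N, ¬ ZMove M' N) : ZWins p S t M
  | mine_step (t : ℕ) (M M' : Multiset ℕ) (hS : t % p ∈ S) (hmv : ZMove M M')
      (h : ZWins p S (t + 1) M') : ZWins p S t M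
  | theirs (t : ℕ) (M : Multiset ℕ) (hS : t % p ∉ S) (hne : ∃ M', ZMove M M')
      (h : ∀ M', ZMove M M' → ZWins p S (t + 1) M') : ZWins p S t M

/-- The specific move `1 + 1 = 2`. -/
def MOneOne (M M' : Multiset ℕ) : Prop :=
  ({1, 1} : Multiset ℕ) ≤ M ∧ M' = M - {1, 1} + {2}

/-- The specific move `1 + 2 = 3`. -/
def MOneTwo (M M' : Multiset ℕ) : Prop :=
  ({1, 2} : Multiset ℕ) ≤ M ∧ M' = M - {1, 2} + {3}

/-- The specific move `2 + 2 = 1 + 3`. -/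
def MTwoTwo (M M' : Multiset ℕ) : Prop :=
  ({2, 2} : Multiset ℕ) ≤ M ∧ M' = M - {2, 2} + {1, 3}

/-- Termination measure for the Zeckendorf game. -/
def zmu (M : Multiset ℕ) : ℕ := 4 * Multiset.card M + 2 * M.sum + M.count 2

lemma zmu_add (A B : Multiset ℕ) : zmu (A + B) = zmu A + zmu B := by
  simp [zmu]; ring

lemma zmove_mu {M M' : Multiset ℕ} (h : ZMove M M') : zmu M' < zmu M := by
  cases h with
  | combine i K hi =>
    rw [zmu_add, zmu_add]
    have : zmu {i + 1} < zmu {i - 1, i} := by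
      simp [zmu, Multiset.insert_eq_cons, Multiset.count_cons, Multiset.count_singleton,
        Multiset.sum_cons]
      split_ifs <;> omega
    omega
  | combine1 K =>
    rw [zmu_add, zmu_add]
    have : zmu {2} < zmu ({1,1} : Multiset ℕ) := by decide
    omega
  | split2 K =>
    rw [zmu_add, zmu_add]
    have : zmu ({1,3} : Multiset ℕ) < zmu ({2,2} : Multiset ℕ) := by decide
    omega
  | split i K hi =>
    rw [zmu_add, zmu_add]
    have : zmu {i - 2, i + 1} < zmu {i, i} := by
      simp [zmu, Multiset.insert_eq_cons, Multiset.count_cons, Multiset.count_singleton,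
        Multiset.sum_cons]
      split_ifs <;> omega
    omega

lemma zmove_sum {M M' : Multiset ℕ} (h : ZMove M M') :
    (M'.map zF).sum = (M.map zF).sum := by
  cases h with
  | combine i K hi =>
    obtain ⟨j, rfl⟩ : ∃ j, i = j + 2 := ⟨i - 2, by omega⟩
    simp [zF, Multiset.insert_eq_cons, Nat.fib_add_two]
    ring
  | combine1 K => simp [zF, Multiset.insert_eq_cons, show Nat.fib 3 = 2 from rfl]; omega
  | split2 K =>
    simp [zF, Multiset.insert_eq_cons, show Nat.fib 3 = 2 from rfl,
      show Nat.fib 4 = 3 from rfl]; omega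
  | split i K hi =>
    obtain ⟨j, rfl⟩ : ∃ j, i = j + 3 := ⟨i - 3, by omega⟩
    simp only [Multiset.insert_eq_cons, Multiset.cons_add, Multiset.singleton_add,
      Multiset.map_cons, Multiset.sum_cons]
    have h1 : zF (j + 3 + 1) = zF (j + 3) + zF (j + 2) := by
      simp [zF, Nat.fib_add_two]; ring
    have h2 : zF (j + 3) = zF (j + 2) + zF (j + 1) := by
      simp [zF, Nat.fib_add_two]; ring
    have h3 : j + 3 - 2 = j + 1 := by omega
    rw [h3, h1, h2]
    ring

lemma zmove_pos {M M' : Multiset ℕ} (h : ZMove M M') (hM : ∀ i ∈ M, 1 ≤ i) :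
    ∀ i ∈ M', 1 ≤ i := by
  cases h with
  | combine i K hi =>
    intro j hj
    rcases Multiset.mem_add.1 hj with hj | hj
    · simp at hj; omega
    · exact hM j (Multiset.mem_add.2 (Or.inr hj))
  | combine1 K =>
    intro j hj
    rcases Multiset.mem_add.1 hj with hj | hj
    · simp at hj; omega
    · exact hM j (Multiset.mem_add.2 (Or.inr hj))
  | split2 K =>
    intro j hj
    rcases Multiset.mem_add.1 hj with hj | hj
    · simp [Multiset.insert_eq_cons] at hj; omega
    · exact hM j (Multiset.mem_add.2 (Or.inr hj))
  | split i K hi =>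
    intro j hj
    rcases Multiset.mem_add.1 hj with hj | hj
    · simp [Multiset.insert_eq_cons] at hj; omega
    · exact hM j (Multiset.mem_add.2 (Or.inr hj))

lemma zreach_inv (n : ℕ) {M : Multiset ℕ}
    (h : Relation.ReflTransGen ZMove (zstart n) M) :
    (∀ i ∈ M, 1 ≤ i) ∧ (M.map zF).sum = n := by
  induction h with
  | refl =>
    constructor
    · intro i hi
      simp [zstart, Multiset.eq_of_mem_replicate hi]
    · simp [zstart, zF]
  | tail hab hbc ih => exact ⟨zmove_pos hbc ih.1, by rw [zmove_sum hbc, ih.2]⟩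

lemma pair_add_eq (a b : ℕ) (K : Multiset ℕ) :
    ({a, b} : Multiset ℕ) + K = a ::ₘ b ::ₘ K := by
  simp [Multiset.insert_eq_cons, Multiset.cons_add, Multiset.singleton_add]

/-- The Zeckendorf game starting from `n` copies of 1 terminates: there is no
infinite sequence of legal moves, and any reachable state with no legal move is
a set of distinct non-consecutive Fibonacci numbers summing to `n`. -/
theorem stmt_3 (n : ℕ) :
    (¬ ∃ f : ℕ → Multiset ℕ, f 0 = zstart n ∧ ∀ k, ZMove (f k) (f (k + 1))) ∧
    (∀ M : Multiset ℕ, Relation.ReflTransGen ZMove (zstart n) M →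
      (∀ N, ¬ ZMove M N) →
      M.Nodup ∧ (∀ i ∈ M, 1 ≤ i) ∧ (∀ i ∈ M, i + 1 ∉ M) ∧
        (M.map zF).sum = n) := by
  have hstart_pos : ∀ i ∈ zstart n, 1 ≤ i := by
    intro i hi
    simp [zstart, Multiset.eq_of_mem_replicate hi]
  have hstart_sum : ((zstart n).map zF).sum = n := by
    simp [zstart, zF]
  constructor
  · rintro ⟨f, hf0, hf⟩
    have key : ∀ k, zmu (f k) + k ≤ zmu (f 0) := by
      intro k
      induction k with
      | zero => simp
      | succ k ih =>
        have := zmove_mu (hf k)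
        omega
    have := key (zmu (f 0) + 1)
    omega
  · intro M hreach hno
    obtain ⟨hpos, hsum⟩ := zreach_inv n hreach
    have hnodup : M.Nodup := by
      by_contra h
      rw [Multiset.nodup_iff_count_le_one] at h
      push_neg at h
      obtain ⟨a, ha⟩ := h
      have ha2 : 2 ≤ M.count a := ha
      have hle : ({a, a} : Multiset ℕ) ≤ M := by
        have := (Multiset.le_count_iff_replicate_le).1 ha2
        simpa [Multiset.replicate_succ, Multiset.insert_eq_cons] using this
      obtain ⟨K, hM⟩ : ∃ K, M = {a, a} + K :=
        ⟨M - {a, a}, by rw [add_comm]; exact (tsub_add_cancel_of_le hle).symm⟩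
      have haM : a ∈ M := Multiset.count_pos.1 (by omega)
      have ha1 : 1 ≤ a := hpos a haM
      rcases Nat.lt_or_ge a 3 with h3 | h3
      · interval_cases a
        · exact hno _ (hM ▸ ZMove.combine1 K)
        · exact hno _ (hM ▸ ZMove.split2 K)
      · exact hno _ (hM ▸ ZMove.split a K h3)
    refine ⟨hnodup, hpos, ?_, hsum⟩
    intro i hi hcons
    obtain ⟨M1, hM1⟩ := Multiset.exists_cons_of_mem hi
    have hi1 : i + 1 ∈ M1 := by
      have := hcons
      rw [hM1] at this
      rcases Multiset.mem_cons.1 this with h | h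
      · omega
      · exact h
    obtain ⟨K, hK⟩ := Multiset.exists_cons_of_mem hi1
    have hM : M = {i, i + 1} + K := by rw [hM1, hK, pair_add_eq]
    apply hno ({i + 1 + 1} + K)
    rw [hM]
    have := ZMove.combine (i + 1) K (by have := hpos i hi; omega)
    simpa using this
end

section
/- A multiset of Fibonacci numbers admits no legal Zeckendorf game move if and only if its elements are distinct and no two are consecutive Fibonacci numbers. -/
/-- A multiset of Fibonacci numbers (indices `≥ 1`) admits no legal Zeckendorf
game move iff its elements are distinct and no two are consecutive. -/
theorem stmt_4 (M : Multiset ℕ) (hM : ∀ i ∈ M, 1 ≤ i) :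
    (∀ N, ¬ ZMove M N) ↔ (M.Nodup ∧ ∀ i ∈ M, i + 1 ∉ M) := by
  constructor
  · intro h
    constructor
    · rw [Multiset.nodup_iff_count_le_one]
      intro a
      by_contra hc
      push_neg at hc
      have ha : a ∈ M := Multiset.count_pos.mp (by omega)
      have h2 : ({a, a} : Multiset ℕ) ≤ M := by
        rw [Multiset.le_iff_count]
        intro b
        by_cases hb : b = a
        · subst hb; simp; omega
        · simp [hb]
      have hMeq : M = {a, a} + (M - {a, a}) := by
        rw [add_comm, tsub_add_cancel_of_le h2]
      have ha1 : 1 ≤ a := hM a ha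
      rcases Nat.lt_or_ge a 3 with h3 | h3
      · interval_cases a
        · exact h _ (hMeq ▸ ZMove.combine1 _)
        · exact h _ (hMeq ▸ ZMove.split2 _)
      · exact h _ (hMeq ▸ ZMove.split a _ h3)
    · intro i hi hi1
      have h2 : ({i, i + 1} : Multiset ℕ) ≤ M := by
        rw [Multiset.le_iff_count]
        intro b
        by_cases hb : b = i
        · subst hb
          have := Multiset.count_pos.mpr hi
          simp; omega
        · by_cases hb1 : b = i + 1
          · subst hb1
            have := Multiset.count_pos.mpr hi1
            simp; omega
          · simp [hb, hb1]
      have hMeq : M = {i, i + 1} + (M - {i, i + 1}) := by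
        rw [add_comm, tsub_add_cancel_of_le h2]
      have hi0 : 1 ≤ i := hM i hi
      have hmv := ZMove.combine (i + 1) (M - {i, i + 1}) (by omega)
      rw [Nat.add_sub_cancel] at hmv
      rw [← hMeq] at hmv; exact h _ hmv
  · rintro ⟨hnd, hcons⟩ N hmv
    rw [Multiset.nodup_iff_count_le_one] at hnd
    cases hmv with
    | combine i M' hi =>
        have h1 : i - 1 ∈ ({i - 1, i} : Multiset ℕ) + M' := by simp
        have h2 : i ∈ ({i - 1, i} : Multiset ℕ) + M' := by simp
        have := hcons (i - 1) h1
        rw [Nat.sub_add_cancel (by omega)] at this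
        exact this h2
    | combine1 M' =>
        have := hnd 1
        simp at this
    | split2 M' =>
        have := hnd 2
        simp at this
    | split i M' hi =>
        have := hnd i
        simp at this
end

section
/- If in one full round of the team Zeckendorf game each of 2d big-alliance players plays 1+1=2 and at least one of the d small-alliance players plays a move other than 2+2=1+3, then the number of 2's in the multiset strictly increases over that round; consequently, after d such rounds at least d copies of 2 have accumulated. -/
lemma zmove_count2 {M M' : Multiset ℕ} (h : ZMove M M') :
    Multiset.count 2 M ≤ Multiset.count 2 M' + 2 := by
  cases h <;>
    simp [Multiset.count_add, Multiset.count_cons, Multiset.count_singleton] <;>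
    first | (split_ifs <;> omega) | omega

lemma zmove_count2' {M M' : Multiset ℕ} (h : ZMove M M') (h2 : ¬ MTwoTwo M M') :
    Multiset.count 2 M ≤ Multiset.count 2 M' + 1 := by
  cases h with
  | combine i N hi =>
      simp only [Multiset.count_add, Multiset.count_cons, Multiset.count_singleton,
        Multiset.insert_eq_cons]
      split_ifs <;> omega
  | combine1 N =>
      have e1 : Multiset.count 2 ({1, 1} : Multiset ℕ) = 0 := by decide
      simp only [Multiset.count_add, e1]
      omega
  | split2 N =>
      exact absurd ⟨Multiset.le_add_right _ _, by rw [add_tsub_cancel_left, add_comm]⟩ h2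
  | split i N hi =>
      simp only [Multiset.count_add, Multiset.count_cons, Multiset.count_singleton,
        Multiset.insert_eq_cons]
      split_ifs <;> omega

lemma moneone_count2 {M M' : Multiset ℕ} (h : MOneOne M M') :
    Multiset.count 2 M' = Multiset.count 2 M + 1 := by
  obtain ⟨hle, rfl⟩ := h
  rw [Multiset.count_add, Multiset.count_sub]
  simp [Multiset.count_cons, Multiset.count_singleton]

lemma round_incr (d : ℕ) (f : ℕ → Multiset ℕ) (s : ℕ)
    (hmov : ∀ k < 3 * d, ZMove (f (s + k)) (f (s + k + 1)))
    (B : Finset ℕ) (hB : B ⊆ Finset.range (3 * d)) (hcard : B.card = 2 * d)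
    (h1 : ∀ k ∈ B, MOneOne (f (s + k)) (f (s + k + 1)))
    (k0 : ℕ) (hk0 : k0 ∈ Finset.range (3 * d) \ B)
    (h2 : ¬ MTwoTwo (f (s + k0)) (f (s + k0 + 1))) :
    Multiset.count 2 (f s) < Multiset.count 2 (f (s + 3 * d)) := by
  rw [Finset.mem_sdiff, Finset.mem_range] at hk0
  obtain ⟨hk0r, hk0B⟩ := hk0
  set g : ℕ → ℤ := fun j => (Multiset.count 2 (f (s + j)) : ℤ) with hg
  have key : ∀ k ∈ Finset.range (3 * d),
      ((if k ∈ B then 3 else 0) + (if k = k0 then 1 else 0) - 2 : ℤ) ≤ g (k + 1) - g k := by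
    intro k hk
    rw [Finset.mem_range] at hk
    by_cases hkB : k ∈ B
    · have := moneone_count2 (h1 k hkB)
      rw [Nat.add_assoc] at this
      have hne : k ≠ k0 := fun h => hk0B (h ▸ hkB)
      simp only [hg, hkB, if_pos, hne, if_neg, if_false]
      push_cast
      omega
    · by_cases hkk0 : k = k0
      · subst hkk0
        have := zmove_count2' (hmov k hk) h2
        rw [Nat.add_assoc] at this
        simp only [hg, hkB, if_neg, if_false, if_pos]
        push_cast
        omega
      · have := zmove_count2 (hmov k hk)
        rw [Nat.add_assoc] at this
        simp only [hg, hkB, hkk0, if_neg, if_false]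
        push_cast
        omega
  have tel : ∑ k ∈ Finset.range (3 * d), (g (k + 1) - g k) = g (3 * d) - g 0 :=
    Finset.sum_range_sub g (3 * d)
  have hsum := Finset.sum_le_sum key
  rw [tel] at hsum
  have e1 : ∑ k ∈ Finset.range (3 * d),
      ((if k ∈ B then 3 else 0) + (if k = k0 then 1 else 0) - 2 : ℤ) = 1 := by
    rw [Finset.sum_sub_distrib, Finset.sum_add_distrib]
    rw [Finset.sum_ite_mem, Finset.inter_eq_right.mpr hB]
    rw [Finset.sum_ite_eq' (Finset.range (3 * d)) k0 (fun _ => (1 : ℤ))]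
    simp [Finset.mem_range.mpr hk0r, hcard]
    ring
  rw [e1] at hsum
  have : g 0 < g (3 * d) := by omega
  simpa [hg] using this


/-- If in each of `d` full rounds (a round being `3d` consecutive legal moves)
the `2d` big-alliance moves are all `1+1=2` and at least one of the remaining
`d` small-alliance moves is not `2+2=1+3`, then the number of 2's strictly
increases over each round; consequently after the `d` rounds at least `d`
copies of 2 have accumulated. -/
theorem stmt_18 (d : ℕ) (hd : 0 < d) (f : ℕ → Multiset ℕ)
    (hmov : ∀ k < 3 * d * d, ZMove (f k) (f (k + 1)))
    (hround : ∀ r < d, ∃ B : Finset ℕ, B ⊆ Finset.range (3 * d) ∧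
      B.card = 2 * d ∧
      (∀ k ∈ B, MOneOne (f (3 * d * r + k)) (f (3 * d * r + k + 1))) ∧
      ∃ k ∈ Finset.range (3 * d) \ B,
        ¬ MTwoTwo (f (3 * d * r + k)) (f (3 * d * r + k + 1))) :
    (∀ r < d, (f (3 * d * r)).count 2 < (f (3 * d * r + 3 * d)).count 2) ∧
    d ≤ (f (3 * d * d)).count 2 := by
  have part1 : ∀ r < d, (f (3 * d * r)).count 2 < (f (3 * d * r + 3 * d)).count 2 := by
    intro r hr
    obtain ⟨B, hB, hcard, h1, k0, hk0, h2⟩ := hround r hr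
    refine round_incr d f (3 * d * r) ?_ B hB hcard h1 k0 hk0 h2
    intro k hk
    refine hmov _ ?_
    calc 3 * d * r + k < 3 * d * r + 3 * d := by omega
      _ = 3 * d * (r + 1) := by ring
      _ ≤ 3 * d * d := Nat.mul_le_mul_left _ (by omega)
  refine ⟨part1, ?_⟩
  have H : ∀ r, r ≤ d → r ≤ (f (3 * d * r)).count 2 := by
    intro r
    induction r with
    | zero => intro _; exact Nat.zero_le _
    | succ r ih =>
        intro hr
        have h1 := ih (by omega)
        have h2 := part1 r (by omega)
        have e : 3 * d * (r + 1) = 3 * d * r + 3 * d := by ring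
        rw [e]
        omega
  exact H d le_rfl
end
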